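/- Let L ∈ ℝ^{N×N} be a symmetric positive semidefinite matrix with kernel spanned by 1_N, and let R ∈ ℝ^{N×(N-1)} satisfy R^T 1_N = 0, R^T R = I_{N-1}. Define the block matrix T = [[-L, -LR],[R^T L, 0]] ∈ ℝ^{(2N-1)×(2N-1)} and S = [-I_N, 0] ∈ ℝ^{N×(2N-1)}. Then T + T^T is negative semidefinite and the pair (S, T) is observable, i.e., for every eigenvector w of T, Sw ≠ 0. -/

import Mathlib

open Matrix

private lemma mapC_mul {n m p : Type*} [Fintype m] (A : Matrix n m ℝ) (B : Matrix m p ℝ) :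
    (A * B).map Complex.ofReal = A.map Complex.ofReal * B.map Complex.ofReal := by
  ext i j
  simp only [Matrix.map_apply, Matrix.mul_apply]
  push_cast
  rfl

private lemma psd_fromBlocks {n m : Type*} [Fintype n] [Fintype m]
    {A : Matrix n n ℝ} (hA : A.PosSemidef) :
    (Matrix.fromBlocks A 0 0 (0 : Matrix m m ℝ)).PosSemidef := by
  have hAt : ∀ i j, A j i = A i j := by
    intro i j
    have := congrFun (congrFun hA.1 j) i
    simpa using this.symm
  rw [Matrix.posSemidef_iff_dotProduct_mulVec]
  constructor
  · ext i j
    cases i <;> cases j <;> simp [Matrix.conjTranspose_apply, hAt]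
  · intro x
    have hx : x = Sum.elim (x ∘ Sum.inl) (x ∘ Sum.inr) := by funext j; cases j <;> rfl
    rw [hx, Matrix.fromBlocks_mulVec]
    simpa [dotProduct, Fintype.sum_sum_type, Matrix.mulVec] using hA.dotProduct_mulVec_nonneg (x ∘ Sum.inl)

/-- For `L` symmetric PSD with kernel spanned by `1_N` and `R` an
orthonormal basis of `1_N^⊥`, the block matrix `T = [[-L, -LR],[RᵀL, 0]]` satisfies
`T + Tᵀ ⪯ 0`, and `(S, T)` with `S = [-I, 0]` is observable: every eigenvector of `T`
is not in the kernel of `S`. -/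
theorem block_matrix_dissipative_and_observable (N : ℕ) (hN : 0 < N)
    (L : Matrix (Fin N) (Fin N) ℝ) (R : Matrix (Fin N) (Fin (N - 1)) ℝ)
    (hLsymm : L.IsSymm) (hLpsd : L.PosSemidef)
    (hker : ∀ x : Fin N → ℝ, L.mulVec x = 0 ↔ ∃ c : ℝ, x = fun _ => c)
    (hR1 : R.transpose.mulVec (fun _ => (1 : ℝ)) = 0)
    (hRorth : R.transpose * R = 1) :
    let T : Matrix (Fin N ⊕ Fin (N - 1)) (Fin N ⊕ Fin (N - 1)) ℝ :=
      Matrix.fromBlocks (-L) (-(L * R)) (R.transpose * L) 0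
    let S : Matrix (Fin N) (Fin N ⊕ Fin (N - 1)) ℝ :=
      Matrix.of fun i j => Sum.casesOn j (fun k => if i = k then (-1 : ℝ) else 0) (fun _ => 0)
    (-(T + T.transpose)).PosSemidef ∧
      ∀ (μ : ℂ) (w : Fin N ⊕ Fin (N - 1) → ℂ), w ≠ 0 →
        (T.map (Complex.ofReal)).mulVec w = μ • w →
        (S.map (Complex.ofReal)).mulVec w ≠ 0 := by
  intro T S
  have hTdef : T = Matrix.fromBlocks (-L) (-(L * R)) (R.transpose * L) 0 := rfl
  have hSdef : S = Matrix.of fun i j =>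
      Sum.casesOn j (fun k => if i = k then (-1 : ℝ) else 0) (fun _ => 0) := rfl
  constructor
  · -- dissipativity
    have hT : -(T + T.transpose) = Matrix.fromBlocks (L + L) 0 0 0 := by
      rw [hTdef, Matrix.fromBlocks_transpose, Matrix.fromBlocks_add, Matrix.fromBlocks_neg]
      congr 1 <;> simp [Matrix.transpose_mul, hLsymm.eq]
    rw [hT]
    exact psd_fromBlocks (hLpsd.add hLpsd)
  · -- observability
    intro μ w hw hTw hSw
    set a : Fin N → ℂ := fun i => w (Sum.inl i) with ha
    set b : Fin (N - 1) → ℂ := fun j => w (Sum.inr j) with hb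
    have hwe : w = Sum.elim a b := by funext j; cases j <;> rfl
    -- Sw = 0 gives a = 0
    have ha0 : a = 0 := by
      funext i
      have h := congrFun hSw i
      simpa [hSdef, Matrix.mulVec, dotProduct, Fintype.sum_sum_type,
        Matrix.map_apply, apply_ite Complex.ofReal, ha] using h
    -- eigen-equation in blocks
    rw [hwe, ha0, hTdef] at hTw
    have hTmap : (Matrix.fromBlocks (-L) (-(L * R)) (R.transpose * L)
        (0 : Matrix (Fin (N-1)) (Fin (N-1)) ℝ)).map Complex.ofReal =
        Matrix.fromBlocks ((-L).map Complex.ofReal) ((-(L * R)).map Complex.ofReal)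
          ((R.transpose * L).map Complex.ofReal) 0 := by
      have h0 : (0 : Matrix (Fin (N-1)) (Fin (N-1)) ℝ).map Complex.ofReal = 0 := by
        ext i j; simp
      rw [Matrix.fromBlocks_map, h0]
    rw [hTmap, Matrix.fromBlocks_mulVec] at hTw
    have hbne : ∃ j, b j ≠ 0 := by
      by_contra h
      push_neg at h
      apply hw
      funext j
      cases j with
      | inl i => exact congrFun ha0 i
      | inr j => exact h j
    obtain ⟨j0, hj0⟩ := hbne
    -- at inr: 0 = μ * b j
    have hμ : μ = 0 := by
      have h := congrFun hTw (Sum.inr j0)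
      simp [Matrix.mulVec_zero] at h
      rcases h with h' | h'
      · exact h'
      · exact absurd h' hj0
    -- at inl: (L*R).map *ᵥ b = 0
    have hLRb : ((L * R).map Complex.ofReal).mulVec b = 0 := by
      funext i
      have h := congrFun hTw (Sum.inl i)
      simp [Matrix.mulVec_zero, hμ] at h
      simpa [Matrix.mulVec, dotProduct, Matrix.map_apply, Matrix.neg_apply] using h
    rw [mapC_mul, ← Matrix.mulVec_mulVec] at hLRb
    set y : Fin N → ℂ := (R.map Complex.ofReal).mulVec b with hy
    -- real and imaginary parts of y are in ker L
    have hcomp : ∀ (u : Fin N → ℂ), (L.map Complex.ofReal).mulVec u = 0 →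
        L.mulVec (fun i => (u i).re) = 0 ∧ L.mulVec (fun i => (u i).im) = 0 := by
      intro u hu
      constructor <;> funext i <;>
      · have h := congrFun hu i
        have h2 := congrArg Complex.re h
        have h3 := congrArg Complex.im h
        simp [Matrix.mulVec, dotProduct, Complex.re_sum, Complex.im_sum,
          Complex.re_ofReal_mul, Complex.im_ofReal_mul, Matrix.map_apply] at h2 h3 ⊢
        first | exact h2 | exact h3
    obtain ⟨hre, him⟩ := hcomp y hLRb
    obtain ⟨c, hc⟩ := (hker _).mp hre
    obtain ⟨d, hd⟩ := (hker _).mp him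
    have hyconst : y = fun _ => ((c : ℂ) + d * Complex.I) := by
      funext i
      apply Complex.ext
      · simpa using congrFun hc i
      · simpa using congrFun hd i
    -- rows of Rᵀ sum to zero
    have hrow : ∀ i, ∑ j, R.transpose i j = 0 := by
      intro i
      simpa [Matrix.mulVec, dotProduct] using congrFun hR1 i
    -- b = Rᵀℂ y = 0
    have hb0 : b = 0 := by
      have h1 : (R.transpose.map Complex.ofReal).mulVec y = b := by
        rw [hy, Matrix.mulVec_mulVec, ← mapC_mul, hRorth]
        funext i
        simp [Matrix.mulVec, dotProduct, Matrix.map_apply, Matrix.one_apply,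
          apply_ite Complex.ofReal]
      rw [hyconst] at h1
      funext i
      rw [← congrFun h1 i]
      simp [Matrix.mulVec, dotProduct, Matrix.map_apply, ← Finset.sum_mul]
      left
      exact_mod_cast hrow i
    exact hj0 (congrFun hb0 j0)
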